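/- For every integer v ≥ k + 1, v·(v - 1)·Δ(v) = f(v)·P(k·r + v - 1 - k) + q·(r - 1)·∑_{j=1}^{k-1} (∑_{i=1}^{j} (v - 1 + i·(q·r - 1))·p^(i-1))·Δ(v - 1 - j). -/

import Mathlib

private lemma geo1 (p : ℝ) : ∀ m : ℕ,
    (1 - p) * ∑ i ∈ Finset.Icc 1 m, p ^ (i - 1) = 1 - p ^ m := by
  intro m
  induction m with
  | zero => simp
  | succ n ih =>
    rw [Finset.sum_Icc_succ_top (by omega)]
    simp only [Nat.add_sub_cancel]
    linear_combination ih

private lemma geo2 (p : ℝ) : ∀ m : ℕ,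
    (1 - p) ^ 2 * ∑ i ∈ Finset.Icc 1 m, (i : ℝ) * p ^ (i - 1)
      = 1 - p ^ m - (1 - p) * m * p ^ m := by
  intro m
  induction m with
  | zero => simp
  | succ n ih =>
    rw [Finset.sum_Icc_succ_top (by omega)]
    simp only [Nat.add_sub_cancel]
    push_cast
    linear_combination ih

private lemma abel (S x : ℕ → ℝ) (hS0 : S 0 = 0) : ∀ m : ℕ,
    ∑ j ∈ Finset.Icc 1 m, S j * (x j - x (j + 1))
      = ∑ j ∈ Finset.Icc 1 m, (S j - S (j - 1)) * x j - S m * x (m + 1) := by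
  intro m
  induction m with
  | zero => simp [hS0]
  | succ n ih =>
    rw [Finset.sum_Icc_succ_top (by omega), Finset.sum_Icc_succ_top (by omega)]
    simp only [Nat.add_sub_cancel]
    linear_combination ih

private lemma key (m : ℕ) (p q rr vv : ℝ) (hq : q = 1 - p) (hq0 : q ≠ 0) (x : ℕ → ℝ) :
    (vv - 1) * (q * ∑ j ∈ Finset.Icc 1 (m + 1),
        (vv + (j : ℝ) * (rr - 1)) * p ^ (j - 1) * x (j - 1))
      + (q * (vv + rr - 1) - vv) * (q * ∑ j ∈ Finset.Icc 1 (m + 1),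
        (vv - 1 + (j : ℝ) * (rr - 1)) * p ^ (j - 1) * x j)
      - q * (vv + rr - 1) * ((vv - 1) * x 0)
    = (-(q * p ^ (m + 1)) * vv ^ 2 +
        (p ^ (m + 1) * (q - (((m + 1 : ℕ) : ℝ) * q + q + 1) * (rr - 1)) + (rr - 1)) * vv +
        (rr - 1) * ((rr - 1) * (1 - p ^ (m + 1) * (1 + ((m + 1 : ℕ) : ℝ) * q)) +
          p ^ (m + 1) * (((m + 1 : ℕ) : ℝ) + q) - (1 - p ^ (m + 1)) / q)) * x (m + 1)
      + q * (rr - 1) * ∑ j ∈ Finset.Icc 1 m,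
          (∑ i ∈ Finset.Icc 1 j, (vv - 1 + (i : ℝ) * (q * rr - 1)) * p ^ (i - 1)) *
            (x j - x (j + 1)) := by
  subst hq
  -- A1 conversion
  have hA1 : ∑ j ∈ Finset.Icc 1 (m + 1),
      (vv + (j : ℝ) * (rr - 1)) * p ^ (j - 1) * x (j - 1)
      = (∑ i ∈ Finset.range m, (vv + ((i : ℝ) + 2) * (rr - 1)) * p ^ (i + 1) * x (i + 1))
        + (vv + rr - 1) * x 0 := by
    rw [← Finset.Ico_add_one_right_eq_Icc, Finset.sum_Ico_eq_sum_range]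
    simp only [Nat.succ_sub_one, Nat.add_sub_cancel]
    rw [Finset.sum_range_succ']
    congr 1
    · apply Finset.sum_congr rfl
      intro i _
      rw [show 1 + (i + 1) - 1 = i + 1 from by omega, show 1 + (i + 1) = i + 2 from by omega]
      push_cast
      ring
    · rw [show (1:ℕ) + 0 - 1 = 0 from rfl, show (1:ℕ) + 0 = 1 from rfl]
      push_cast
      ring
  -- A2 conversion
  have hA2 : ∑ j ∈ Finset.Icc 1 (m + 1),
      (vv - 1 + (j : ℝ) * (rr - 1)) * p ^ (j - 1) * x j
      = (∑ i ∈ Finset.range m, (vv - 1 + ((i : ℝ) + 1) * (rr - 1)) * p ^ i * x (i + 1))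
        + (vv - 1 + ((m : ℝ) + 1) * (rr - 1)) * p ^ m * x (m + 1) := by
    rw [← Finset.Ico_add_one_right_eq_Icc, Finset.sum_Ico_eq_sum_range]
    simp only [Nat.succ_sub_one, Nat.add_sub_cancel]
    rw [Finset.sum_range_succ]
    congr 1
    · apply Finset.sum_congr rfl
      intro i _
      rw [show 1 + i - 1 = i from by omega, show 1 + i = i + 1 from by omega]
      push_cast
      ring
    · rw [show 1 + m - 1 = m from by omega, show 1 + m = m + 1 from by omega]
      push_cast
      ring
  -- A3 conversion (Abel summation)
  have habel := abel (fun j => ∑ i ∈ Finset.Icc 1 j,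
      (vv - 1 + (i : ℝ) * ((1 - p) * rr - 1)) * p ^ (i - 1)) x (by simp) m
  have hA3 : ∑ j ∈ Finset.Icc 1 m,
      (∑ i ∈ Finset.Icc 1 j, (vv - 1 + (i : ℝ) * ((1 - p) * rr - 1)) * p ^ (i - 1)) *
        (x j - x (j + 1))
      = (∑ i ∈ Finset.range m,
          ((vv - 1 + ((i : ℝ) + 1) * ((1 - p) * rr - 1)) * p ^ i) * x (i + 1))
        - (∑ i ∈ Finset.Icc 1 m, (vv - 1 + (i : ℝ) * ((1 - p) * rr - 1)) * p ^ (i - 1)) *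
            x (m + 1) := by
    rw [habel]
    congr 1
    rw [← Finset.Ico_add_one_right_eq_Icc, Finset.sum_Ico_eq_sum_range]
    simp only [Nat.succ_sub_one, Nat.add_sub_cancel]
    apply Finset.sum_congr rfl
    intro i _
    rw [show 1 + i - 1 = i from by omega, show 1 + i = i + 1 from by omega,
      Finset.sum_Icc_succ_top (by omega : 1 ≤ i + 1)]
    simp only [Nat.add_sub_cancel]
    push_cast
    ring
  rw [hA1, hA2, hA3]
  -- merged middle sums
  have hsum : (vv - 1) * ((1 - p) *
        ∑ i ∈ Finset.range m, (vv + ((i : ℝ) + 2) * (rr - 1)) * p ^ (i + 1) * x (i + 1))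
      + ((1 - p) * (vv + rr - 1) - vv) * ((1 - p) *
        ∑ i ∈ Finset.range m, (vv - 1 + ((i : ℝ) + 1) * (rr - 1)) * p ^ i * x (i + 1))
      = (1 - p) * (rr - 1) *
        ∑ i ∈ Finset.range m,
          ((vv - 1 + ((i : ℝ) + 1) * ((1 - p) * rr - 1)) * p ^ i) * x (i + 1) := by
    rw [Finset.mul_sum, Finset.mul_sum, Finset.mul_sum, Finset.mul_sum, Finset.mul_sum,
      ← Finset.sum_add_distrib]
    apply Finset.sum_congr rfl
    intro i _
    ring
  -- x (m+1) coefficient identity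
  have hSm : ∑ i ∈ Finset.Icc 1 m, (vv - 1 + (i : ℝ) * ((1 - p) * rr - 1)) * p ^ (i - 1)
      = (vv - 1) * (∑ i ∈ Finset.Icc 1 m, p ^ (i - 1))
        + ((1 - p) * rr - 1) * ∑ i ∈ Finset.Icc 1 m, (i : ℝ) * p ^ (i - 1) := by
    rw [Finset.mul_sum, Finset.mul_sum, ← Finset.sum_add_distrib]
    apply Finset.sum_congr rfl
    intro i _
    ring
  have e1 := geo1 p m
  have e2 := geo2 p m
  have hdiv : (1 - p ^ (m + 1)) / (1 - p) = (∑ i ∈ Finset.Icc 1 m, p ^ (i - 1)) + p ^ m := by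
    rw [div_eq_iff hq0]
    linear_combination -e1
  have h5 : ((1 - p) * (vv + rr - 1) - vv) *
        ((1 - p) * ((vv - 1 + ((m : ℝ) + 1) * (rr - 1)) * p ^ m))
      + (1 - p) * (rr - 1) *
        (∑ i ∈ Finset.Icc 1 m, (vv - 1 + (i : ℝ) * ((1 - p) * rr - 1)) * p ^ (i - 1))
      = -((1 - p) * p ^ (m + 1)) * vv ^ 2 +
          (p ^ (m + 1) * ((1 - p) - (((m + 1 : ℕ) : ℝ) * (1 - p) + (1 - p) + 1) * (rr - 1)) +
            (rr - 1)) * vv +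
          (rr - 1) * ((rr - 1) * (1 - p ^ (m + 1) * (1 + ((m + 1 : ℕ) : ℝ) * (1 - p))) +
            p ^ (m + 1) * (((m + 1 : ℕ) : ℝ) + (1 - p)) - (1 - p ^ (m + 1)) / (1 - p)) := by
    rw [hSm, hdiv]
    apply mul_left_cancel₀ hq0
    push_cast
    linear_combination ((rr - 1) * ((1 - p) * (vv - 1) + 1)) * e1 +
      ((rr - 1) * ((1 - p) * rr - 1)) * e2
  linear_combination hsum + x (m + 1) * h5

/-- Equation (2.2): for every integer `v ≥ k + 1`,
`v·(v-1)·Δ(v) = f(v)·P(k·r+v-1-k)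
  + q·(r-1)·∑_{j=1}^{k-1} (∑_{i=1}^{j} (v-1+i·(q·r-1))·p^(i-1))·Δ(v-1-j)`. -/
theorem delta_recurrence_second
    (k r : ℕ) (hk : 1 ≤ k) (hr : 1 ≤ r)
    (p q : ℝ) (hp0 : 0 < p) (hp1 : p < 1) (hq : q = 1 - p)
    (P : ℕ → ℝ)
    (hP0 : ∀ n, n < k * r → P n = 0)
    (hPkr : P (k * r) = p ^ (k * r))
    (hrec : ∀ n, k * r < n →
      ((n : ℝ) - k * r) * P n =
        q * ∑ j ∈ Finset.Icc 1 k,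
          ((n : ℝ) - k * r + j * (r - 1)) * p ^ (j - 1) * P (n - j))
    (Δ : ℕ → ℝ)
    (hΔ : ∀ v : ℕ, 1 ≤ v → Δ v = P (k * r + v) - P (k * r + v - 1))
    (f : ℝ → ℝ)
    (hf : ∀ v : ℝ, f v =
      -(q * p ^ k) * v ^ 2 + (p ^ k * (q - (k * q + q + 1) * (r - 1)) + (r - 1)) * v +
        (r - 1) * ((r - 1) * (1 - p ^ k * (1 + k * q)) + p ^ k * (k + q) - (1 - p ^ k) / q)) :
    ∀ v : ℕ, k + 1 ≤ v →
      (v : ℝ) * ((v : ℝ) - 1) * Δ v = f v * P (k * r + v - 1 - k) +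
        q * (r - 1) * ∑ j ∈ Finset.Icc 1 (k - 1),
          (∑ i ∈ Finset.Icc 1 j, ((v : ℝ) - 1 + i * (q * r - 1)) * p ^ (i - 1)) *
            Δ (v - 1 - j) := by
  intro v hv
  obtain ⟨m, rfl⟩ : ∃ m, k = m + 1 := ⟨k - 1, by omega⟩
  have hq0 : q ≠ 0 := by rw [hq]; intro h; nlinarith
  set N := (m + 1) * r with hN
  have h1v : (1 : ℕ) ≤ v := by omega
  -- first use of the recurrence, at n = N + v
  have hE1 : (v : ℝ) * P (N + v) = q * ∑ j ∈ Finset.Icc 1 (m + 1),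
      ((v : ℝ) + (j : ℝ) * ((r : ℝ) - 1)) * p ^ (j - 1) * P (N + v - 1 - (j - 1)) := by
    have h := hrec (N + v) (by omega)
    have hc : ((N + v : ℕ) : ℝ) - ((m + 1 : ℕ) : ℝ) * (r : ℝ) = (v : ℝ) := by
      push_cast [hN]; ring
    rw [hc] at h
    rw [h]
    congr 1
    apply Finset.sum_congr rfl
    intro j hj
    rw [Finset.mem_Icc] at hj
    rw [show N + v - j = N + v - 1 - (j - 1) from by omega]
  -- second use of the recurrence, at n = N + v - 1
  have hE2 : ((v : ℝ) - 1) * P (N + v - 1) = q * ∑ j ∈ Finset.Icc 1 (m + 1),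
      ((v : ℝ) - 1 + (j : ℝ) * ((r : ℝ) - 1)) * p ^ (j - 1) * P (N + v - 1 - j) := by
    have h := hrec (N + v - 1) (by omega)
    have hc : ((N + v - 1 : ℕ) : ℝ) - ((m + 1 : ℕ) : ℝ) * (r : ℝ) = (v : ℝ) - 1 := by
      rw [Nat.cast_sub (by omega)]
      push_cast [hN]
      ring
    rw [hc] at h
    exact h
  -- key algebraic identity
  have hkey := key m p q (r : ℝ) (v : ℝ) hq hq0 (fun n => P (N + v - 1 - n))
  simp only [Nat.sub_zero] at hkey
  -- rewrite the Δ's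
  have hΔv : Δ v = P (N + v) - P (N + v - 1) := hΔ v h1v
  have hΔsum : ∑ j ∈ Finset.Icc 1 (m + 1 - 1),
      (∑ i ∈ Finset.Icc 1 j, ((v : ℝ) - 1 + (i : ℝ) * (q * (r : ℝ) - 1)) * p ^ (i - 1)) *
        Δ (v - 1 - j)
      = ∑ j ∈ Finset.Icc 1 m,
      (∑ i ∈ Finset.Icc 1 j, ((v : ℝ) - 1 + (i : ℝ) * (q * (r : ℝ) - 1)) * p ^ (i - 1)) *
        (P (N + v - 1 - j) - P (N + v - 1 - (j + 1))) := by
    rw [show m + 1 - 1 = m from rfl]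
    apply Finset.sum_congr rfl
    intro j hj
    rw [Finset.mem_Icc] at hj
    rw [hΔ (v - 1 - j) (by omega),
      show N + (v - 1 - j) = N + v - 1 - j from by omega,
      show N + v - 1 - j - 1 = N + v - 1 - (j + 1) from by omega]
  rw [hf, hΔv, hΔsum]
  linear_combination hkey + ((v : ℝ) - 1) * hE1 + (q * ((v : ℝ) + (r : ℝ) - 1) - (v : ℝ)) * hE2
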